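/- Right-derivative identity for the capture-time law: under Conditions C1, C2 and Axioms 1–3, for every t > t_0 the limit lim_{Δt → 0+} ℙ( T_c ∈ [t, t+Δt] ) / Δt exists and equals α · ℙ( T_c ≥ t and X̃(t) ∈ D_c ). -/

import Mathlib

open MeasureTheory Set Filter Topology

/-- Conditional probability of the event `A` given the event `B`:
`ℙ(A | B) = ℙ(A ∩ B) / ℙ(B)`. -/
noncomputable def cprob {Ω : Type*} [MeasurableSpace Ω] (P : Measure Ω) (A B : Set Ω) : ℝ :=
  (P (A ∩ B)).toReal / (P B).toReal

/-- Right-derivative identity for the capture-time law: under Conditions C1–C2 and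
Axioms 1–3, for every `t > t₀`, `lim_{Δt → 0⁺} ℙ(T_c ∈ [t, t+Δt]) / Δt` exists and
equals `α·ℙ(T_c ≥ t, X̃(t) ∈ D_c)`. -/
theorem capture_time_right_derivative
    {Ω : Type*} [MeasurableSpace Ω] (P : Measure Ω) [IsProbabilityMeasure P]
    (t0 : ℝ) {d : ℕ} (hd : 1 ≤ d)
    (Dc : Set (Fin d → ℝ)) (hDc : MeasurableSet Dc)
    (X : ℝ → Ω → (Fin d → ℝ)) (hX : ∀ t, Measurable (X t))
    (Tc : Ω → EReal) (hTc : Measurable Tc)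
    (α : ℝ) (hα : 0 < α)
    (hC1 : ∀ t > t0, 0 < P {ω | X t ω ∈ Dc})
    (hC2 : ContinuousOn
      (fun q : ℝ × ℝ => (P ({ω | X q.1 ω ∈ Dc} ∩ {ω | X q.2 ω ∈ Dc})).toReal)
      (Ioi t0 ×ˢ Ioi t0))
    (hAx1 : ∀ ω, (t0 : EReal) < Tc ω)
    (hAx2 : ∀ t > t0,
      Tendsto (fun Δt : ℝ =>
          cprob P {ω | (t : EReal) ≤ Tc ω ∧ Tc ω ≤ ((t + Δt : ℝ) : EReal)}
            {ω | (t : EReal) ≤ Tc ω ∧ X t ω ∈ Dc} / Δt)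
        (𝓝[>] 0) (𝓝 α))
    (hAx3 : ∀ t > t0, ∀ S : Set ℝ, MeasurableSet S → S ⊆ Ioi t0 →
      (P ({ω | X t ω ∈ Dc} ∩ {ω | Tc ω ∈ Real.toEReal '' S})).toReal
        = ∫ u in S, cprob P {ω | X t ω ∈ Dc} {ω | X u ω ∈ Dc}
            ∂((Measure.map Tc P).comap Real.toEReal)) :
    ∀ t > t0,
      Tendsto (fun Δt : ℝ =>
          (P {ω | (t : EReal) ≤ Tc ω ∧ Tc ω ≤ ((t + Δt : ℝ) : EReal)}).toReal / Δt)
        (𝓝[>] 0)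
        (𝓝 (α * (P {ω | (t : EReal) ≤ Tc ω ∧ X t ω ∈ Dc}).toReal)) := by
  intro t ht
  have hemb : MeasurableEmbedding (Real.toEReal) :=
    EReal.isOpenEmbedding_coe.measurableEmbedding
  set μ : Measure ℝ := (Measure.map Tc P).comap Real.toEReal with hμdef
  set C : Set Ω := {ω | X t ω ∈ Dc} with hCdef
  have hCmeas : MeasurableSet C := hX t hDc
  set B : Set Ω := {ω | (t : EReal) ≤ Tc ω ∧ X t ω ∈ Dc} with hBdef
  set A : ℝ → Set Ω := fun Δt => {ω | (t : EReal) ≤ Tc ω ∧ Tc ω ≤ ((t + Δt : ℝ) : EReal)}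
    with hAdef
  have hApre : ∀ Δt : ℝ, A Δt = Tc ⁻¹' (Icc (t : EReal) ((t + Δt : ℝ) : EReal)) := by
    intro Δt; rfl
  have hAmeas : ∀ Δt : ℝ, MeasurableSet (A Δt) := fun Δt => by
    rw [hApre]; exact hTc measurableSet_Icc
  haveI : IsProbabilityMeasure (Measure.map Tc P) :=
    Measure.isProbabilityMeasure_map hTc.aemeasurable
  haveI hμfin : IsFiniteMeasure μ := by
    constructor
    rw [hμdef, hemb.comap_apply]
    exact measure_lt_top _ _
  have hμI : ∀ Δt : ℝ, μ (Icc t (t + Δt)) = P (A Δt) := by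
    intro Δt
    rw [hμdef, hemb.comap_apply,
      Measure.map_apply hTc (hemb.measurableSet_image' measurableSet_Icc),
      EReal.image_coe_Icc, hApre]
  -- P B ≠ 0
  have hPBne : P B ≠ 0 := by
    intro h0
    have h1 := hAx2 t ht
    have h2 : Tendsto (fun _ : ℝ => (0 : ℝ)) (𝓝[>] (0 : ℝ)) (𝓝 α) := by
      refine h1.congr fun Δt => ?_
      have e : P {ω | (t : EReal) ≤ Tc ω ∧ X t ω ∈ Dc} = 0 := h0
      simp [cprob, e]
    have := tendsto_nhds_unique h2 tendsto_const_nhds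
    exact absurd this (by linarith)
  have hPBR : (P B).toReal ≠ 0 :=
    ENNReal.toReal_ne_zero.mpr ⟨hPBne, measure_ne_top P B⟩
  have hPBRpos : 0 < (P B).toReal := lt_of_le_of_ne ENNReal.toReal_nonneg (Ne.symm hPBR)
  -- A ∩ B = A ∩ C
  have hABC : ∀ Δt : ℝ, A Δt ∩ B = A Δt ∩ C := by
    intro Δt; ext ω
    simp only [hAdef, hBdef, hCdef, mem_inter_iff, mem_setOf_eq]
    tauto
  set L : ℝ := α * (P B).toReal with hLdef
  have hL0 : 0 ≤ L := mul_nonneg hα.le ENNReal.toReal_nonneg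
  -- hf : (P (A Δt ∩ C)).toReal / Δt → L
  have hf : Tendsto (fun Δt : ℝ => (P (A Δt ∩ C)).toReal / Δt) (𝓝[>] (0 : ℝ)) (𝓝 L) := by
    have h1 := (hAx2 t ht).mul_const (P B).toReal
    refine h1.congr fun Δt => ?_
    have e1 : ({ω | (t : EReal) ≤ Tc ω ∧ Tc ω ≤ ((t + Δt : ℝ) : EReal)}
        ∩ {ω | (t : EReal) ≤ Tc ω ∧ X t ω ∈ Dc} : Set Ω) = A Δt ∩ C := hABC Δt
    have e2 : ({ω | (t : EReal) ≤ Tc ω ∧ X t ω ∈ Dc} : Set Ω) = B := rfl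
    rw [cprob, e1, e2]
    field_simp
  -- the function g
  set g : ℝ → ℝ := fun u => cprob P C {ω | X u ω ∈ Dc} with hgdef
  have hden : ∀ u ∈ Ioi t0, (0 : ℝ) < (P {ω | X u ω ∈ Dc}).toReal := by
    intro u hu
    exact ENNReal.toReal_pos (hC1 u hu).ne' (measure_ne_top _ _)
  have hg_le_one : ∀ u ∈ Ioi t0, g u ≤ 1 := by
    intro u hu
    rw [hgdef]
    apply div_le_one_of_le₀
    · exact ENNReal.toReal_mono (measure_ne_top _ _) (measure_mono inter_subset_right)
    · exact ENNReal.toReal_nonneg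
  have hg_nonneg : ∀ u, 0 ≤ g u := fun u =>
    div_nonneg ENNReal.toReal_nonneg ENNReal.toReal_nonneg
  have hgt : g t = 1 := by
    rw [hgdef]
    simp only [cprob, hCdef, inter_self]
    exact div_self (ENNReal.toReal_pos (hC1 t ht).ne' (measure_ne_top _ _)).ne'
  have hgcont : ContinuousOn g (Ioi t0) := by
    have hnum : ContinuousOn (fun u : ℝ => (P (C ∩ {ω | X u ω ∈ Dc})).toReal) (Ioi t0) := by
      have := hC2.comp (f := fun u : ℝ => ((t : ℝ), u))
        (Continuous.continuousOn (continuous_const.prodMk continuous_id))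
        (fun u hu => mk_mem_prod ht hu)
      exact this
    have hde : ContinuousOn (fun u : ℝ => (P {ω | X u ω ∈ Dc}).toReal) (Ioi t0) := by
      have := hC2.comp (f := fun u : ℝ => (u, u))
        (Continuous.continuousOn (continuous_id.prodMk continuous_id))
        (fun u hu => mk_mem_prod hu hu)
      simpa only [Function.comp_def, inter_self] using this
    exact hnum.div hde (fun u hu => (hden u hu).ne')
  have hgctsAt : ContinuousAt g t :=
    hgcont.continuousAt (Ioi_mem_nhds ht)
  -- decomposition of P(A Δt)
  have hdecomp : ∀ Δt : ℝ, (P (A Δt)).toReal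
      = (P (A Δt ∩ C)).toReal + (P (A Δt \ C)).toReal := by
    intro Δt
    rw [← ENNReal.toReal_add (measure_ne_top _ _) (measure_ne_top _ _),
      measure_inter_add_diff _ hCmeas]
  -- residual tends to zero
  have hr : Tendsto (fun Δt : ℝ => (P (A Δt \ C)).toReal / Δt) (𝓝[>] (0 : ℝ)) (𝓝 0) := by
    rw [Metric.tendsto_nhdsWithin_nhds]
    intro ε hε
    obtain ⟨δ₁, hδ₁pos, hδ₁⟩ := Metric.tendsto_nhdsWithin_nhds.mp hf 1 one_pos
    have hL1 : (0:ℝ) < L + 1 := by linarith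
    set ε' : ℝ := min (ε / (4 * (L + 1))) (1/2) with hε'def
    have hε'pos : 0 < ε' := lt_min (by positivity) (by norm_num)
    have hε'le : ε' ≤ 1/2 := min_le_right _ _
    obtain ⟨δ₂, hδ₂pos, hδ₂⟩ := Metric.continuousAt_iff.mp hgctsAt ε' hε'pos
    refine ⟨min δ₁ (δ₂ / 2), lt_min hδ₁pos (by linarith), ?_⟩
    intro Δt hΔt hdist
    have hΔtpos : 0 < Δt := hΔt
    rw [Real.dist_eq, sub_zero, abs_of_pos hΔtpos] at hdist
    have hΔtδ₁ : Δt < δ₁ := lt_of_lt_of_le hdist (min_le_left _ _)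
    have hΔtδ₂ : Δt < δ₂ / 2 := lt_of_lt_of_le hdist (min_le_right _ _)
    set I : Set ℝ := Icc t (t + Δt) with hIdef
    have hsub : I ⊆ Ioi t0 := fun u hu => lt_of_lt_of_le ht hu.1
    -- g close to 1 on I
    have hgI : ∀ u ∈ I, 1 - g u ≤ ε' := by
      intro u hu
      have hd : dist u t < δ₂ := by
        rw [Real.dist_eq]
        have h1 : t ≤ u := hu.1
        have h2 : u ≤ t + Δt := hu.2
        rw [abs_of_nonneg (by linarith)]
        linarith
      have := hδ₂ hd
      rw [Real.dist_eq, hgt] at this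
      have := abs_lt.mp this
      linarith [this.1]
    -- integrability
    have hintg : IntegrableOn g I μ := by
      refine Integrable.mono' (integrable_const 1)
        (((hgcont.mono hsub).aemeasurable measurableSet_Icc).aestronglyMeasurable) ?_
      filter_upwards [ae_restrict_mem measurableSet_Icc] with u hu
      rw [Real.norm_eq_abs, abs_of_nonneg (hg_nonneg u)]
      exact hg_le_one u (hsub hu)
    have hint1 : IntegrableOn (fun _ : ℝ => (1 : ℝ)) I μ := integrable_const 1
    -- key identities
    have hfint : (P (A Δt ∩ C)).toReal = ∫ u in I, g u ∂μ := by
      have h3 := hAx3 t ht I measurableSet_Icc hsub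
      have hset : {ω | Tc ω ∈ Real.toEReal '' I} = A Δt := by
        rw [hIdef, EReal.image_coe_Icc, hApre]
        rfl
      rw [hset, inter_comm] at h3
      exact h3
    have hμIR : (μ I).toReal = (P (A Δt ∩ C)).toReal + (P (A Δt \ C)).toReal := by
      rw [hμI, hdecomp]
    have hrint : (P (A Δt \ C)).toReal = ∫ u in I, (1 - g u) ∂μ := by
      rw [integral_sub hint1 hintg, setIntegral_const, smul_eq_mul, mul_one]
      rw [measureReal_def, hμI]
      rw [hdecomp, hfint]
      ring
    have hrbound : (P (A Δt \ C)).toReal ≤ ε' * (μ I).toReal := by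
      rw [hrint]
      calc ∫ u in I, (1 - g u) ∂μ ≤ ∫ _ in I, ε' ∂μ := by
            refine setIntegral_mono_on (hint1.sub hintg) (integrable_const ε')
              measurableSet_Icc (fun u hu => hgI u hu)
        _ = ε' * (μ I).toReal := by rw [setIntegral_const, smul_eq_mul, measureReal_def]; ring
    set fv : ℝ := (P (A Δt ∩ C)).toReal with hfvdef
    set rv : ℝ := (P (A Δt \ C)).toReal with hrvdef
    have hrv0 : 0 ≤ rv := ENNReal.toReal_nonneg
    have hfv0 : 0 ≤ fv := ENNReal.toReal_nonneg
    have hkey : rv ≤ ε' * (fv + rv) := by rw [← hμIR]; exact hrbound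
    have hrv2 : rv ≤ 2 * ε' * fv := by nlinarith
    have hfvb : fv / Δt < L + 1 := by
      have := hδ₁ hΔt (by rw [Real.dist_eq, sub_zero, abs_of_pos hΔtpos]; exact hΔtδ₁)
      rw [Real.dist_eq] at this
      have := abs_lt.mp this
      linarith [this.2]
    have hε'2 : ε' ≤ ε / (4 * (L + 1)) := min_le_left _ _
    have hfinal : rv / Δt < ε := by
      have h1 : rv / Δt ≤ 2 * ε' * (fv / Δt) := by
        rw [div_le_iff₀ hΔtpos] at *
        calc rv ≤ 2 * ε' * fv := hrv2
          _ = 2 * ε' * (fv / Δt) * Δt := by field_simp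
      have h2 : 2 * ε' * (fv / Δt) ≤ 2 * ε' * (L + 1) := by
        apply mul_le_mul_of_nonneg_left (le_of_lt hfvb) (by positivity)
      have h3 : 2 * ε' * (L + 1) ≤ ε / 2 := by
        have h4 : ε' * (4 * (L + 1)) ≤ ε := (le_div_iff₀ (by positivity)).mp hε'2
        nlinarith
      linarith
    rw [Real.dist_eq, sub_zero, abs_of_nonneg (div_nonneg hrv0 hΔtpos.le)]
    exact hfinal
  -- combine
  have : Tendsto (fun Δt : ℝ => (P (A Δt ∩ C)).toReal / Δt + (P (A Δt \ C)).toReal / Δt)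
      (𝓝[>] (0 : ℝ)) (𝓝 (L + 0)) := hf.add hr
  rw [add_zero] at this
  refine this.congr fun Δt => ?_
  rw [← add_div, ← hdecomp]
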